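/- Let 0 ≤ m ≤ n be integers and let f and g be real-valued functions on Q_m. Let F and G be their extensions to Q_n defined by F(x) = f(x_1,…,x_m) and G(x) = g(x_1,…,x_m) for x ∈ {-1,1}^n. Then f and g are isomorphic as functions on Q_m if and only if F and G are isomorphic as functions on Q_n. -/

import Mathlib

/-- Negate the `i`-th coordinate of a vertex `x` of the hypercube `{-1,1}^n`
(coordinates are `ℤˣ = {-1,1}`). -/
def flipCoord {n : ℕ} (x : Fin n → ℤˣ) (i : Fin n) : Fin n → ℤˣ :=
  Function.update x i (-(x i))

/-- `f` is a `k`-function: every vertex has exactly `k` neighbours where `f` differs. -/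
def IsKFun {n : ℕ} {β : Type*} (k : ℕ) (f : (Fin n → ℤˣ) → β) : Prop :=
  ∀ x, Set.ncard {i : Fin n | f (flipCoord x i) ≠ f x} = k

/-- Two real-valued functions on `Q_n` are isomorphic: `f x = ε • g y` with
`y i = α i * x (σ i)` for a sign `ε`, a vector `α ∈ {-1,1}^n` and a permutation `σ`. -/
def Isom {n : ℕ} (f g : (Fin n → ℤˣ) → ℝ) : Prop :=
  ∃ (ε : ℤˣ) (α : Fin n → ℤˣ) (σ : Equiv.Perm (Fin n)),
    ∀ x, f x = ((ε : ℤ) : ℝ) * g (fun i => α i * x (σ i))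

/-- View a Boolean (`ℤˣ`-valued) function as real-valued. -/
noncomputable def toReal {n : ℕ} (f : (Fin n → ℤˣ) → ℤˣ) : (Fin n → ℤˣ) → ℝ :=
  fun x => ((f x : ℤ) : ℝ)

/-- Functions on `Q_m` are isomorphic iff their extensions to `Q_n` (ignoring the
last `n - m` coordinates) are isomorphic. -/
theorem isom_iff_isom_extend (m n : ℕ) (hmn : m ≤ n)
    (f g : (Fin m → ℤˣ) → ℝ) :
    Isom f g ↔
      Isom (fun x : Fin n → ℤˣ => f (fun i => x (Fin.castLE hmn i)))
           (fun x : Fin n → ℤˣ => g (fun i => x (Fin.castLE hmn i))) := by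
  classical
  constructor
  · rintro ⟨ε, α, σ, h⟩
    -- extend σ to a permutation of Fin n
    have hinj : Function.Injective
        (fun j : Fin n => if hj : (j : ℕ) < m then Fin.castLE hmn (σ ⟨j, hj⟩) else j) := by
      intro a b hab
      dsimp only at hab
      by_cases ha : (a : ℕ) < m <;> by_cases hb : (b : ℕ) < m
      · rw [dif_pos ha, dif_pos hb] at hab
        have h1 := σ.injective (Fin.castLE_injective hmn hab)
        have h2 : (a : ℕ) = (b : ℕ) := congrArg (fun z : Fin m => (z : ℕ)) h1
        exact Fin.ext h2
      · rw [dif_pos ha, dif_neg hb] at hab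
        have h1 : ((Fin.castLE hmn (σ ⟨a, ha⟩) : Fin n) : ℕ) = (b : ℕ) := congrArg Fin.val hab
        have h2 : ((σ ⟨a, ha⟩ : Fin m) : ℕ) < m := (σ ⟨a, ha⟩).isLt
        rw [Fin.coe_castLE] at h1
        omega
      · rw [dif_neg ha, dif_pos hb] at hab
        have h1 : ((a : Fin n) : ℕ) = ((Fin.castLE hmn (σ ⟨b, hb⟩) : Fin n) : ℕ) :=
          congrArg Fin.val hab
        have h2 : ((σ ⟨b, hb⟩ : Fin m) : ℕ) < m := (σ ⟨b, hb⟩).isLt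
        rw [Fin.coe_castLE] at h1
        omega
      · rw [dif_neg ha, dif_neg hb] at hab
        exact hab
    let σ' : Equiv.Perm (Fin n) :=
      Equiv.ofBijective _ (Finite.injective_iff_bijective.mp hinj)
    refine ⟨ε, fun j => if hj : (j : ℕ) < m then α ⟨j, hj⟩ else 1, σ', ?_⟩
    intro x
    have key := h (fun i => x (Fin.castLE hmn i))
    simp only at key ⊢
    rw [key]
    apply congrArg
    apply congrArg
    funext i
    have hσ' : σ' (Fin.castLE hmn i) = Fin.castLE hmn (σ i) := by
      show (if hj : ((Fin.castLE hmn i : Fin n) : ℕ) < m then _ else _) = _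
      rw [dif_pos (show ((Fin.castLE hmn i : Fin n) : ℕ) < m from i.isLt)]
      exact congrArg (Fin.castLE hmn) (congrArg σ (Fin.ext rfl))
    rw [hσ', dif_pos (show ((Fin.castLE hmn i : Fin n) : ℕ) < m from i.isLt)]
    exact congrArg (fun z => α z * x (Fin.castLE hmn (σ i))) (Fin.ext rfl)
  · rintro ⟨ε, α, σ, h⟩
    set φ : Fin m → Fin n := fun i => σ (Fin.castLE hmn i) with hφdef
    have hφ : Function.Injective φ := fun a b hab =>
      Fin.castLE_injective hmn (σ.injective hab)
    have hε : (((ε : ℤ) : ℝ)) ≠ 0 := by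
      rcases Int.units_eq_one_or ε with h' | h' <;> rw [h'] <;> norm_num
    have H : ∀ X : Fin n → ℤˣ,
        f (fun i => X (Fin.castLE hmn i)) =
          ((ε : ℤ) : ℝ) * g (fun i => α (Fin.castLE hmn i) * X (φ i)) := fun X => h X
    -- key: an explicit formula for g in terms of f
    have key : ∀ u : Fin m → ℤˣ,
        ((ε : ℤ) : ℝ) * g u =
          f (fun j => Function.extend φ (fun i => α (Fin.castLE hmn i) * u i)
              (fun _ => 1) (Fin.castLE hmn j)) := by
      intro u
      rw [H (Function.extend φ (fun i => α (Fin.castLE hmn i) * u i) (fun _ => 1))]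
      refine congrArg _ (congrArg g (funext fun i => ?_))
      rw [hφ.extend_apply, ← mul_assoc, Int.units_mul_self, one_mul]
    -- insensitivity: g only depends on the coordinates i with (φ i : ℕ) < m
    have L : ∀ u v : Fin m → ℤˣ,
        (∀ i, ((φ i : Fin n) : ℕ) < m → u i = v i) → g u = g v := by
      intro u v huv
      apply mul_left_cancel₀ hε
      rw [key u, key v]
      refine congrArg f (funext fun j => ?_)
      by_cases hqj : ∃ i, φ i = Fin.castLE hmn j
      · obtain ⟨i, hi⟩ := hqj
        rw [← hi, hφ.extend_apply, hφ.extend_apply,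
          huv i (by rw [hi]; exact j.isLt)]
      · rw [Function.extend_apply' _ _ _ hqj, Function.extend_apply' _ _ _ hqj]
    -- construct the permutation τ of Fin m
    have hbij : Function.Bijective
        (fun i : {i : Fin m // ((φ i : Fin n) : ℕ) < m} =>
          (⟨⟨((φ i.1 : Fin n) : ℕ), i.2⟩, ⟨i.1, Fin.ext rfl⟩⟩ :
            {j : Fin m // ∃ i, φ i = Fin.castLE hmn j})) := by
      constructor
      · intro a b hab
        have h1 : ((φ a.1 : Fin n) : ℕ) = ((φ b.1 : Fin n) : ℕ) :=
          congrArg (fun z : {j : Fin m // ∃ i, φ i = Fin.castLE hmn j} => ((z.1 : Fin m) : ℕ)) hab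
        exact Subtype.ext (hφ (Fin.ext h1))
      · rintro ⟨j, i, hi⟩
        have hlt : ((φ i : Fin n) : ℕ) < m := by rw [hi]; exact j.isLt
        refine ⟨⟨i, hlt⟩, ?_⟩
        apply Subtype.ext
        apply Fin.ext
        show ((φ i : Fin n) : ℕ) = (j : ℕ)
        rw [hi]; rfl
    let e₀ : {i : Fin m // ((φ i : Fin n) : ℕ) < m} ≃
        {j : Fin m // ∃ i, φ i = Fin.castLE hmn j} := Equiv.ofBijective _ hbij
    let e₁ : {i : Fin m // ¬ ((φ i : Fin n) : ℕ) < m} ≃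
        {j : Fin m // ¬ ∃ i, φ i = Fin.castLE hmn j} := by
      apply Fintype.equivOfCardEq
      rw [Fintype.card_subtype_compl, Fintype.card_subtype_compl, Fintype.card_congr e₀]
    let τ : Equiv.Perm (Fin m) := Equiv.subtypeCongr e₀ e₁
    have hτ : ∀ (i : Fin m) (hi : ((φ i : Fin n) : ℕ) < m), τ i = ⟨((φ i : Fin n) : ℕ), hi⟩ := by
      intro i hi
      show (Equiv.sumCompl _) ((e₀.sumCongr e₁) ((Equiv.sumCompl _).symm i)) = _
      rw [Equiv.sumCompl_symm_apply_of_pos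
        (p := fun i : Fin m => ((φ i : Fin n) : ℕ) < m) (a := i) hi]
      rfl
    refine ⟨ε, fun i => α (Fin.castLE hmn i), τ, ?_⟩
    intro x
    have hx := H (fun j : Fin n => if hj : (j : ℕ) < m then x ⟨j, hj⟩ else 1)
    have hxl : (fun i : Fin m =>
        (fun j : Fin n => if hj : (j : ℕ) < m then x ⟨j, hj⟩ else 1) (Fin.castLE hmn i)) = x := by
      funext i
      dsimp only
      rw [dif_pos (show ((Fin.castLE hmn i : Fin n) : ℕ) < m from i.isLt)]
      exact congrArg x (Fin.ext rfl)
    rw [hxl] at hx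
    show f x = _
    rw [hx]
    refine congrArg _ (L _ _ fun i hi => ?_)
    simp only [dif_pos hi, hτ i hi]
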